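/- Let f be a partial Boolean function and ε ∈ [0, 1/2). Then R₀(f_sab) ≥ R̄_ε(f_sab) ≥ (1 − 2ε) · R₀(f_sab). That is, the ε-error expected query complexity of the sabotage problem of f is within a factor 1 − 2ε of its zero-error expected query complexity. -/

import Mathlib

/-! ### Decision trees -/

/-- A deterministic decision tree querying positions of type `ι`, receiving answers
in `α`, and producing an output in `β`. -/
inductive DTree (ι α β : Type) : Type
  | leaf (b : β) : DTree ι α β
  | node (i : ι) (next : α → DTree ι α β) : DTree ι α β

namespace DTree

variable {ι α β : Type}

/-- The output of a decision tree on input `x`. -/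
def output : DTree ι α β → (ι → α) → β
  | leaf b, _ => b
  | node i next, x => (next (x i)).output x

/-- The number of queries made by a decision tree on input `x`. -/
def cost : DTree ι α β → (ι → α) → ℕ
  | leaf _, _ => 0
  | node i next, x => (next (x i)).cost x + 1

/-- The set of positions queried by a decision tree on input `x`. -/
def queries : DTree ι α β → (ι → α) → Set ι
  | leaf _, _ => ∅
  | node i next, x => insert i ((next (x i)).queries x)

end DTree

/-- A partial function on inputs `ι → α` with outputs in `β`; `none` means undefined
(the domain is the set of inputs mapped to `some` value). -/
abbrev PFn (ι α β : Type) := (ι → α) → Option β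

/-- `t` computes the partial function `f` (correct on every input of the domain). -/
def DTree.computesP {ι α β : Type} (t : DTree ι α β) (f : PFn ι α β) : Prop :=
  ∀ x b, f x = some b → t.output x = b

/-- Deterministic query complexity `D(f)`. -/
noncomputable def Dq {ι α β : Type} (f : PFn ι α β) : ℝ :=
  sInf {T : ℝ | 0 ≤ T ∧ ∃ t : DTree ι α β, t.computesP f ∧ ∀ x, (t.cost x : ℝ) ≤ T}

/-! ### Randomized query algorithms -/

/-- A randomized query algorithm: a finitely supported probability distribution over
deterministic decision trees. -/
structure RandAlg (ι α β : Type) where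
  Ω : Type
  [fin : Fintype Ω]
  p : Ω → ℝ
  nonneg : ∀ ω, 0 ≤ p ω
  sum_one : ∑ ω, p ω = 1
  tree : Ω → DTree ι α β

namespace RandAlg

variable {ι α β : Type}

/-- Expected number of queries of `A` on input `x`. -/
noncomputable def expCost (A : RandAlg ι α β) (x : ι → α) : ℝ :=
  letI := A.fin
  ∑ ω, A.p ω * ((A.tree ω).cost x : ℝ)

open Classical in
/-- Probability that `A` outputs `b` on input `x`. -/
noncomputable def succProb (A : RandAlg ι α β) (x : ι → α) (b : β) : ℝ :=
  letI := A.fin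
  ∑ ω, if (A.tree ω).output x = b then A.p ω else 0

/-- `A` computes `f` with error at most `ε`: on every input of the domain the correct
output is produced with probability at least `1 - ε`. -/
def Computes (A : RandAlg ι α β) (f : PFn ι α β) (ε : ℝ) : Prop :=
  ∀ x b, f x = some b → 1 - ε ≤ A.succProb x b

/-- The worst-case cost of `A` (over all inputs and all trees in the support) is at most `T`. -/
def WCostLe (A : RandAlg ι α β) (T : ℝ) : Prop :=
  ∀ ω, A.p ω ≠ 0 → ∀ x, ((A.tree ω).cost x : ℝ) ≤ T

/-- The expected cost of `A` on every input of the domain of `f` is at most `T`. -/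
def ECostLe (A : RandAlg ι α β) (f : PFn ι α β) (T : ℝ) : Prop :=
  ∀ x, (f x).isSome → A.expCost x ≤ T

end RandAlg

/-- `R_ε(f)`: minimum worst-case cost of an `ε`-error randomized algorithm for `f`. -/
noncomputable def Rw {ι α β : Type} (ε : ℝ) (f : PFn ι α β) : ℝ :=
  sInf {T : ℝ | 0 ≤ T ∧ ∃ A : RandAlg ι α β, A.Computes f ε ∧ A.WCostLe T}

/-- `R̄_ε(f)`: minimum expected cost of an `ε`-error randomized algorithm for `f`. -/
noncomputable def Rbar {ι α β : Type} (ε : ℝ) (f : PFn ι α β) : ℝ :=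
  sInf {T : ℝ | 0 ≤ T ∧ ∃ A : RandAlg ι α β, A.Computes f ε ∧ A.ECostLe f T}

/-- `R₀(f)`: zero-error expected randomized query complexity. -/
noncomputable def R0 {ι α β : Type} (f : PFn ι α β) : ℝ := Rbar 0 f

/-- `R(f) := R_{1/3}(f)`: bounded-error randomized query complexity. -/
noncomputable def Rb {ι α β : Type} (f : PFn ι α β) : ℝ := Rw (1/3) f

/-- The total function `f` viewed as a partial function. -/
def tot {ι α β : Type} (f : (ι → α) → β) : PFn ι α β := fun x => some (f x)


/-! ### Sabotage complexity and composition -/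

/-- The four-letter alphabet `{0, 1, *, †}` of sabotaged inputs. -/
inductive Sab : Type
  | zero : Sab
  | one : Sab
  | star : Sab
  | dagger : Sab
deriving DecidableEq

/-- Embedding of Boolean values into the sabotage alphabet. -/
def Sab.ofBool : Bool → Sab
  | false => Sab.zero
  | true => Sab.one

/-- `p` is consistent with the Boolean input `x`: wherever `p` has a Boolean entry,
it agrees with `x`. -/
def SabConsistent {ι : Type} (p : ι → Sab) (x : ι → Bool) : Prop :=
  ∀ i, p i = Sab.ofBool (x i) ∨ p i = Sab.star ∨ p i = Sab.dagger

/-- `p` is a sabotaged input for `f` using the sabotage symbol `s`: all entries of `p`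
lie in `{0, 1, s}` and `p` is consistent with both a `0`-input and a `1`-input of `f`. -/
def IsSabotaged {ι : Type} (f : PFn ι Bool Bool) (s : Sab) (p : ι → Sab) : Prop :=
  (∀ i, p i = Sab.zero ∨ p i = Sab.one ∨ p i = s) ∧
  ∃ x y, (f x).isSome ∧ (f y).isSome ∧ f x ≠ f y ∧ SabConsistent p x ∧ SabConsistent p y

open Classical in
/-- The sabotage problem `f_sab` associated with `f`: it is `0` on `P_f` (inputs
sabotaged with `*`) and `1` on `P_f†` (inputs sabotaged with `†`). -/
noncomputable def fsab {ι : Type} (f : PFn ι Bool Bool) : PFn ι Sab Bool :=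
  fun p =>
    if IsSabotaged f Sab.star p then some false
    else if IsSabotaged f Sab.dagger p then some true
    else none

open Classical in
/-- `f_usab`: the restriction of `f_sab` to inputs having exactly one `*` or `†` entry. -/
noncomputable def fusab {ι : Type} (f : PFn ι Bool Bool) : PFn ι Sab Bool :=
  fun p =>
    if ∃! i, p i = Sab.star ∨ p i = Sab.dagger then fsab f p else none

/-- Randomized sabotage complexity `RS(f) := R₀(f_sab)`. -/
noncomputable def RS {ι : Type} (f : PFn ι Bool Bool) : ℝ := R0 (fsab f)

/-- `RS_u(f) := R₀(f_usab)` (this is `0` automatically when `f_usab` has empty domain). -/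
noncomputable def RSu {ι : Type} (f : PFn ι Bool Bool) : ℝ := R0 (fusab f)

open Classical in
/-- Composition `f ∘ g` of partial functions: defined on an input exactly when every
inner copy of `g` is defined and the tuple of inner values lies in the domain of `f`. -/
noncomputable def pcomp {κ ι α β γ : Type} (f : PFn κ β γ) (g : PFn ι α β) :
    PFn (κ × ι) α γ :=
  fun x =>
    if h : ∀ i : κ, (g fun j => x (i, j)).isSome then
      f fun i => (g fun j => x (i, j)).get (h i)
    else none

/-- Index types for iterated self-composition. -/
def IterIdx (κ : Type) : ℕ → Type
  | 0 => κ
  | n + 1 => κ × IterIdx κ n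

/-- `iterComp f n` is `f` composed with itself `n + 1` times
(`iterComp f 0 = f`, `iterComp f (n+1) = f ∘ iterComp f n`). -/
noncomputable def iterComp {κ : Type} (f : PFn κ Bool Bool) : (n : ℕ) → PFn (IterIdx κ n) Bool Bool
  | 0 => f
  | n + 1 => pcomp f (iterComp f n)

/-! ### The index function -/

/-- The value of a bit-string read as a binary number (bit `i` has weight `2^i`). -/
def binval {b : ℕ} (x : Fin b → Bool) : ℕ := ∑ i, if x i then 2 ^ (i : ℕ) else 0

theorem sum_range_two_pow (b : ℕ) : ∑ i ∈ Finset.range b, 2 ^ i = 2 ^ b - 1 := by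
  induction b with
  | zero => simp
  | succ n ih =>
    rw [Finset.sum_range_succ, ih, pow_succ]
    have : 1 ≤ 2 ^ n := Nat.one_le_two_pow
    omega

theorem binval_lt {b : ℕ} (x : Fin b → Bool) : binval x < 2 ^ b := by
  have h1 : binval x ≤ ∑ i : Fin b, 2 ^ (i : ℕ) := by
    refine Finset.sum_le_sum fun i _ => ?_
    split <;> simp
  have h2 : ∑ i : Fin b, 2 ^ (i : ℕ) = 2 ^ b - 1 := by
    rw [Fin.sum_univ_eq_sum_range (fun i => 2 ^ i) b]
    exact sum_range_two_pow b
  have h3 : 0 < 2 ^ b := Nat.pow_pos (by norm_num)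
  omega

/-- The largest `c` with `c + 2^c ≤ m`. -/
def indexC (m : ℕ) : ℕ := Nat.findGreatest (fun c => c + 2 ^ c ≤ m) m

/-- The index function `Ind_m : {0,1}^m → {0,1}`: the first `c` bits (where `c` is the
largest integer with `c + 2^c ≤ m`) are read as a binary address `y` into the next
`2^c` bits, and the output is the addressed bit. -/
def IndFn (m : ℕ) : PFn (Fin m) Bool Bool :=
  fun x =>
    let c := indexC m
    let y := ∑ i : Fin m, if (i : ℕ) < c ∧ x i = true then 2 ^ (i : ℕ) else 0
    if h : c + y < m then some (x ⟨c + y, h⟩) else none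

/-- `f^{⊕c}_ind`: the index function on `c + 2^c` bits with `f` composed into each of
the `c` address bits only. -/
def findex {n : ℕ} (f : PFn (Fin n) Bool Bool) (c : ℕ) :
    PFn ((Fin c × Fin n) ⊕ Fin (2 ^ c)) Bool Bool :=
  fun x =>
    if h : ∀ i : Fin c, (f fun j => x (Sum.inl (i, j))).isSome then
      some (x (Sum.inr ⟨binval fun i => (f fun j => x (Sum.inl (i, j))).get (h i),
        binval_lt _⟩))
    else none


namespace SabAux

variable {ι : Type}

/-- Stop-at-sabotage combinator: on `*` output `false`, on `†` output `true`,
otherwise continue. -/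
def sabStop (cont : DTree ι Sab Bool) : Sab → DTree ι Sab Bool
  | Sab.star => DTree.leaf false
  | Sab.dagger => DTree.leaf true
  | Sab.zero => cont
  | Sab.one => cont

/-- Run `t`, stopping when a `*`/`†` is seen; if `t` reaches a leaf, continue with `k`. -/
def trunc : DTree ι Sab Bool → DTree ι Sab Bool → DTree ι Sab Bool
  | DTree.leaf _, k => k
  | DTree.node i next, k => DTree.node i fun a => sabStop (trunc (next a) k) a

/-- Query all positions in a list, stopping at a `*`/`†`. -/
def sweep : List ι → DTree ι Sab Bool
  | [] => DTree.leaf false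
  | i :: l => DTree.node i fun a => sabStop (sweep l) a

/-- Chain several truncated runs, ending with `base`. -/
def chain (base : DTree ι Sab Bool) : List (DTree ι Sab Bool) → DTree ι Sab Bool
  | [] => base
  | t :: l => trunc t (chain base l)

/-- The sabotage entries of `p` all match `b`. -/
def Good (p : ι → Sab) (b : Bool) : Prop :=
  (∀ i, p i = Sab.star → b = false) ∧ (∀ i, p i = Sab.dagger → b = true)

/-- `t` queries a sabotaged position on input `p`. -/
def Hits (t : DTree ι Sab Bool) (p : ι → Sab) : Prop :=
  ∃ i ∈ t.queries p, p i = Sab.star ∨ p i = Sab.dagger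

lemma sweep_output {p : ι → Sab} {b : Bool} (hg : Good p b) :
    ∀ l : List ι, (∃ i ∈ l, p i = Sab.star ∨ p i = Sab.dagger) →
      (sweep l).output p = b
  | [], h => by simp at h
  | i :: l, h => by
    cases hpi : p i with
    | star => rw [hg.1 i hpi]; simp [sweep, DTree.output, hpi, sabStop]
    | dagger => rw [hg.2 i hpi]; simp [sweep, DTree.output, hpi, sabStop]
    | zero =>
      obtain ⟨j, hj, hjs⟩ := h
      rcases List.mem_cons.mp hj with rfl | hj
      · rw [hpi] at hjs; rcases hjs with h' | h' <;> simp at h'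
      · simpa [sweep, DTree.output, hpi, sabStop] using sweep_output hg l ⟨j, hj, hjs⟩
    | one =>
      obtain ⟨j, hj, hjs⟩ := h
      rcases List.mem_cons.mp hj with rfl | hj
      · rw [hpi] at hjs; rcases hjs with h' | h' <;> simp at h'
      · simpa [sweep, DTree.output, hpi, sabStop] using sweep_output hg l ⟨j, hj, hjs⟩

lemma sweep_cost (p : ι → Sab) : ∀ l : List ι, (sweep l).cost p ≤ l.length
  | [] => by simp [sweep, DTree.cost]
  | i :: l => by
    have := sweep_cost p l
    cases hpi : p i <;> simp [sweep, DTree.cost, hpi, sabStop] <;> omega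

lemma trunc_output {p : ι → Sab} {b : Bool} (hg : Good p b) {k : DTree ι Sab Bool}
    (hk : k.output p = b) : ∀ t : DTree ι Sab Bool, (trunc t k).output p = b
  | DTree.leaf _ => by simpa [trunc] using hk
  | DTree.node i next => by
    cases hpi : p i with
    | star => rw [hg.1 i hpi]; simp [trunc, DTree.output, hpi, sabStop]
    | dagger => rw [hg.2 i hpi]; simp [trunc, DTree.output, hpi, sabStop]
    | zero => simpa [trunc, DTree.output, hpi, sabStop] using trunc_output hg hk (next (p i)) |>.trans rfl
    | one => simpa [trunc, DTree.output, hpi, sabStop] using trunc_output hg hk (next (p i))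

lemma chain_output {p : ι → Sab} {b : Bool} (hg : Good p b) {base : DTree ι Sab Bool}
    (hb : base.output p = b) : ∀ l : List (DTree ι Sab Bool), (chain base l).output p = b
  | [] => hb
  | t :: l => trunc_output hg (chain_output hg hb l) t

lemma trunc_cost_le (p : ι → Sab) (k : DTree ι Sab Bool) :
    ∀ t : DTree ι Sab Bool, (trunc t k).cost p ≤ t.cost p + k.cost p
  | DTree.leaf _ => by simp [trunc, DTree.cost]
  | DTree.node i next => by
    cases hpi : p i with
    | star => simp [trunc, DTree.cost, hpi, sabStop]; omega
    | dagger => simp [trunc, DTree.cost, hpi, sabStop]; omega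
    | zero =>
      have := trunc_cost_le p k (next (p i))
      simp [trunc, DTree.cost, hpi, sabStop] at this ⊢; omega
    | one =>
      have := trunc_cost_le p k (next (p i))
      simp [trunc, DTree.cost, hpi, sabStop] at this ⊢; omega

lemma trunc_cost_of_hits (p : ι → Sab) (k : DTree ι Sab Bool) :
    ∀ t : DTree ι Sab Bool, Hits t p → (trunc t k).cost p ≤ t.cost p
  | DTree.leaf _, h => by
    obtain ⟨j, hj, _⟩ := h; simp [DTree.queries] at hj
  | DTree.node i next, h => by
    cases hpi : p i with
    | star => simp [trunc, DTree.cost, hpi, sabStop]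
    | dagger => simp [trunc, DTree.cost, hpi, sabStop]
    | zero =>
      obtain ⟨j, hj, hjs⟩ := h
      simp only [DTree.queries, Set.mem_insert_iff] at hj
      rcases hj with rfl | hj
      · rw [hpi] at hjs; rcases hjs with h' | h' <;> simp at h'
      · have := trunc_cost_of_hits p k (next (p i)) ⟨j, hj, hjs⟩
        rw [hpi] at this
        simp [trunc, DTree.cost, hpi, sabStop] at this ⊢; omega
    | one =>
      obtain ⟨j, hj, hjs⟩ := h
      simp only [DTree.queries, Set.mem_insert_iff] at hj
      rcases hj with rfl | hj
      · rw [hpi] at hjs; rcases hjs with h' | h' <;> simp at h'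
      · have := trunc_cost_of_hits p k (next (p i)) ⟨j, hj, hjs⟩
        rw [hpi] at this
        simp [trunc, DTree.cost, hpi, sabStop] at this ⊢; omega

lemma output_congr {p q : ι → Sab} :
    ∀ t : DTree ι Sab Bool, (∀ i ∈ t.queries p, p i = q i) → t.output p = t.output q
  | DTree.leaf _, _ => rfl
  | DTree.node i next, h => by
    have hi : p i = q i := h i (by simp [DTree.queries])
    have := output_congr (next (p i)) fun j hj => h j (by simp [DTree.queries]; right; exact hj)
    simp only [DTree.output, ← hi]
    exact this

end SabAux
namespace SabAux

variable {ι : Type}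

/-- Swap `*` and `†` in an input. -/
def flipSD (p : ι → Sab) : ι → Sab := fun i =>
  match p i with
  | Sab.star => Sab.dagger
  | Sab.dagger => Sab.star
  | a => a

lemma sabConsistent_flip {p : ι → Sab} {x : ι → Bool} (h : SabConsistent p x) :
    SabConsistent (flipSD p) x := by
  intro i
  rcases h i with h' | h' | h' <;> simp only [flipSD, h']
  · cases x i <;> simp [Sab.ofBool]
  · tauto
  · tauto

lemma exists_nonbool {f : PFn ι Bool Bool} {p : ι → Sab} {s : Sab}
    (h : IsSabotaged f s p) : ∃ i, p i = Sab.star ∨ p i = Sab.dagger := by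
  by_contra hc
  push_neg at hc
  obtain ⟨x, y, hx, hy, hxy, hcx, hcy⟩ := h.2
  have hxyeq : x = y := by
    funext i
    rcases hc i with ⟨h1, h2⟩
    have hx' : p i = Sab.ofBool (x i) := by rcases hcx i with h' | h' | h' <;> tauto
    have hy' : p i = Sab.ofBool (y i) := by rcases hcy i with h' | h' | h' <;> tauto
    rw [hx'] at hy'
    cases hx : x i <;> cases hy : y i <;> rw [hx, hy] at hy' <;> simp [Sab.ofBool] at hy' <;> rfl
  exact hxy (by rw [hxyeq])

lemma good_of_fsab {f : PFn ι Bool Bool} {p : ι → Sab} {b : Bool}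
    (h : fsab f p = some b) :
    Good p b ∧ (∃ i, p i = Sab.star ∨ p i = Sab.dagger) := by
  classical
  unfold fsab at h
  by_cases hs : IsSabotaged f Sab.star p
  · rw [if_pos hs] at h
    have hb : b = false := by simpa using h.symm
    subst hb
    refine ⟨⟨fun i _ => rfl, fun i hi => ?_⟩, exists_nonbool hs⟩
    rcases hs.1 i with h' | h' | h' <;> rw [hi] at h' <;> simp at h'
  · rw [if_neg hs] at h
    by_cases hd : IsSabotaged f Sab.dagger p
    · rw [if_pos hd] at h
      have hb : b = true := by simpa using h.symm
      subst hb
      refine ⟨⟨fun i hi => ?_, fun i _ => rfl⟩, exists_nonbool hd⟩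
      rcases hd.1 i with h' | h' | h' <;> rw [hi] at h' <;> simp at h'
    · rw [if_neg hd] at h; simp at h

lemma isSab_flip_star {f : PFn ι Bool Bool} {p : ι → Sab}
    (hs : IsSabotaged f Sab.star p) : IsSabotaged f Sab.dagger (flipSD p) := by
  obtain ⟨h1, x, y, hx, hy, hxy, hcx, hcy⟩ := hs
  refine ⟨fun i => ?_, x, y, hx, hy, hxy, sabConsistent_flip hcx, sabConsistent_flip hcy⟩
  rcases h1 i with h' | h' | h' <;> simp [flipSD, h']

lemma isSab_flip_dagger {f : PFn ι Bool Bool} {p : ι → Sab}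
    (hs : IsSabotaged f Sab.dagger p) : IsSabotaged f Sab.star (flipSD p) := by
  obtain ⟨h1, x, y, hx, hy, hxy, hcx, hcy⟩ := hs
  refine ⟨fun i => ?_, x, y, hx, hy, hxy, sabConsistent_flip hcx, sabConsistent_flip hcy⟩
  rcases h1 i with h' | h' | h' <;> simp [flipSD, h']

lemma fsab_flip {f : PFn ι Bool Bool} {p : ι → Sab} {b : Bool}
    (h : fsab f p = some b) : fsab f (flipSD p) = some (!b) := by
  classical
  have hgood := good_of_fsab h
  unfold fsab at h ⊢
  by_cases hs : IsSabotaged f Sab.star p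
  · rw [if_pos hs] at h
    have hb : b = false := by simpa using h.symm
    subst hb
    have hd' : IsSabotaged f Sab.dagger (flipSD p) := isSab_flip_star hs
    have hns : ¬ IsSabotaged f Sab.star (flipSD p) := by
      intro hcon
      obtain ⟨i, hi⟩ := hgood.2
      have hi' : p i = Sab.star := by
        rcases hi with h' | h'
        · exact h'
        · exfalso; rcases hs.1 i with h'' | h'' | h'' <;> rw [h'] at h'' <;> simp at h''
      have : flipSD p i = Sab.dagger := by simp [flipSD, hi']
      rcases hcon.1 i with h'' | h'' | h'' <;> rw [this] at h'' <;> simp at h''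
    rw [if_neg hns, if_pos hd']; rfl
  · rw [if_neg hs] at h
    by_cases hd : IsSabotaged f Sab.dagger p
    · rw [if_pos hd] at h
      have hb : b = true := by simpa using h.symm
      subst hb
      have hs' : IsSabotaged f Sab.star (flipSD p) := isSab_flip_dagger hd
      rw [if_pos hs']; rfl
    · rw [if_neg hd] at h; simp at h

lemma flip_eq_of_bool {p : ι → Sab} {i : ι}
    (h1 : p i ≠ Sab.star) (h2 : p i ≠ Sab.dagger) : flipSD p i = p i := by
  cases h : p i <;> simp [flipSD, h] <;> tauto

end SabAux
namespace SabAux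

open Finset

variable {ι : Type} {Ω : Type} [Fintype Ω]

lemma sum_split (w : Ω → ℝ) (P : Ω → Prop) [DecidablePred P] :
    (∑ ω, if P ω then w ω else 0) + (∑ ω, if P ω then 0 else w ω) = ∑ ω, w ω := by
  rw [← Finset.sum_add_distrib]
  refine Finset.sum_congr rfl fun ω _ => ?_
  split <;> ring

set_option linter.deprecated false

lemma prodw_sum (w : Ω → ℝ) (hw1 : ∑ ω, w ω = 1) :
    ∀ k : ℕ, ∑ ω : Fin k → Ω, ∏ j, w (ω j) = 1
  | 0 => by simp
  | k + 1 => by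
    rw [← (Fin.consEquiv fun _ : Fin (k+1) => Ω).sum_comp (fun ω => ∏ j, w (ω j)),
      Fintype.sum_prod_type]
    have key : ∀ (a : Ω) (ω' : Fin k → Ω),
        (∏ j, w ((Fin.consEquiv fun _ : Fin (k+1) => Ω) (a, ω') j)) = w a * ∏ j, w (ω' j) := by
      intro a ω'
      rw [Fin.prod_univ_succ]
      simp [Fin.consEquiv]
    simp only [key]
    rw [← Finset.sum_mul_sum, hw1, prodw_sum w hw1 k, mul_one]

lemma sum_ite_all (w : Ω → ℝ) (P : Ω → Prop) [DecidablePred P]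
    (h : ∀ ω, P ω) : (∑ ω, if P ω then w ω else 0) = ∑ ω, w ω :=
  Finset.sum_congr rfl fun ω _ => if_pos (h ω)

open Classical in
lemma chain_cost_bound (w : Ω → ℝ) (hw0 : ∀ ω, 0 ≤ w ω) (hw1 : ∑ ω, w ω = 1)
    (trees : Ω → DTree ι Sab Bool) (p : ι → Sab) (base : DTree ι Sab Bool)
    (T : ℝ) (hT0 : 0 ≤ T) (hT : ∑ ω, w ω * ((trees ω).cost p : ℝ) ≤ T) :
    ∀ k : ℕ, ∑ ω : Fin k → Ω, (∏ j, w (ω j)) *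
        ((chain base (List.ofFn fun j => trees (ω j))).cost p : ℝ)
      ≤ T * (∑ j ∈ Finset.range k, (∑ ω, if Hits (trees ω) p then 0 else w ω) ^ j)
        + (∑ ω, if Hits (trees ω) p then 0 else w ω) ^ k * (base.cost p : ℝ)
  | 0 => by simp [chain]
  | k + 1 => by
    set δ : ℝ := ∑ ω, if Hits (trees ω) p then 0 else w ω with hδdef
    have hδ0 : 0 ≤ δ := Finset.sum_nonneg fun ω _ => by split <;> simp [hw0 ω]
    rw [← (Fin.consEquiv fun _ : Fin (k+1) => Ω).sum_comp
      (fun ω : Fin (k+1) → Ω => (∏ j, w (ω j)) *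
        ((chain base (List.ofFn fun j => trees (ω j))).cost p : ℝ)),
      Fintype.sum_prod_type]
    have keyw : ∀ (a : Ω) (ω' : Fin k → Ω),
        (∏ j, w ((Fin.consEquiv fun _ : Fin (k+1) => Ω) (a, ω') j)) = w a * ∏ j, w (ω' j) := by
      intro a ω'
      rw [Fin.prod_univ_succ]
      simp [Fin.consEquiv]
    have keyl : ∀ (a : Ω) (ω' : Fin k → Ω),
        (List.ofFn fun j : Fin (k+1) => trees ((Fin.consEquiv fun _ : Fin (k+1) => Ω) (a, ω') j))
          = trees a :: List.ofFn fun j => trees (ω' j) := by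
      intro a ω'
      rw [List.ofFn_succ]
      simp [Fin.consEquiv]
    simp only [keyw, keyl]
    have step : ∀ (a : Ω) (ω' : Fin k → Ω),
        (w a * ∏ j, w (ω' j)) *
            ((chain base (trees a :: List.ofFn fun j => trees (ω' j))).cost p : ℝ)
          ≤ (w a * ((trees a).cost p : ℝ)) * (∏ j, w (ω' j))
            + ((if Hits (trees a) p then 0 else w a) *
              ((∏ j, w (ω' j)) *
                ((chain base (List.ofFn fun j => trees (ω' j))).cost p : ℝ))) := by
      intro a ω'
      have hWnn : 0 ≤ ∏ j, w (ω' j) := Finset.prod_nonneg fun j _ => hw0 _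
      set K := chain base (List.ofFn fun j => trees (ω' j)) with hK
      have hchain : chain base (trees a :: List.ofFn fun j => trees (ω' j))
          = trunc (trees a) K := rfl
      rw [hchain]
      by_cases hh : Hits (trees a) p
      · have hc : ((trunc (trees a) K).cost p : ℝ) ≤ ((trees a).cost p : ℝ) := by
          exact_mod_cast trunc_cost_of_hits p K (trees a) hh
        rw [if_pos hh]
        calc (w a * ∏ j, w (ω' j)) * ((trunc (trees a) K).cost p : ℝ)
            ≤ (w a * ∏ j, w (ω' j)) * ((trees a).cost p : ℝ) :=
              mul_le_mul_of_nonneg_left hc (mul_nonneg (hw0 a) hWnn)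
          _ = (w a * ((trees a).cost p : ℝ)) * (∏ j, w (ω' j)) := by ring
          _ ≤ _ := by simp
      · have hc : ((trunc (trees a) K).cost p : ℝ)
            ≤ ((trees a).cost p : ℝ) + (K.cost p : ℝ) := by
          exact_mod_cast trunc_cost_le p K (trees a)
        rw [if_neg hh]
        calc (w a * ∏ j, w (ω' j)) * ((trunc (trees a) K).cost p : ℝ)
            ≤ (w a * ∏ j, w (ω' j)) * (((trees a).cost p : ℝ) + (K.cost p : ℝ)) :=
              mul_le_mul_of_nonneg_left hc (mul_nonneg (hw0 a) hWnn)
          _ = (w a * ((trees a).cost p : ℝ)) * (∏ j, w (ω' j))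
              + w a * ((∏ j, w (ω' j)) * (K.cost p : ℝ)) := by ring
    calc ∑ a, ∑ ω' : Fin k → Ω, (w a * ∏ j, w (ω' j)) *
            ((chain base (trees a :: List.ofFn fun j => trees (ω' j))).cost p : ℝ)
        ≤ ∑ a, ∑ ω' : Fin k → Ω,
            ((w a * ((trees a).cost p : ℝ)) * (∏ j, w (ω' j))
            + ((if Hits (trees a) p then 0 else w a) *
              ((∏ j, w (ω' j)) *
                ((chain base (List.ofFn fun j => trees (ω' j))).cost p : ℝ)))) :=
          Finset.sum_le_sum fun a _ => Finset.sum_le_sum fun ω' _ => step a ω'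
      _ = (∑ a, w a * ((trees a).cost p : ℝ)) * (∑ ω' : Fin k → Ω, ∏ j, w (ω' j))
          + δ * (∑ ω' : Fin k → Ω, (∏ j, w (ω' j)) *
              ((chain base (List.ofFn fun j => trees (ω' j))).cost p : ℝ)) := by
          simp only [Finset.sum_add_distrib]
          rw [← Finset.sum_mul_sum, ← Finset.sum_mul_sum]
      _ ≤ T * 1 + δ * (T * (∑ j ∈ Finset.range k, δ ^ j) + δ ^ k * (base.cost p : ℝ)) := by
          rw [prodw_sum w hw1 k]
          have h2 := chain_cost_bound w hw0 hw1 trees p base T hT0 hT k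
          have h3 : (∑ ω' : Fin k → Ω, (∏ j, w (ω' j)) *
              ((chain base (List.ofFn fun j => trees (ω' j))).cost p : ℝ)) ≥ 0 :=
            Finset.sum_nonneg fun ω' _ =>
              mul_nonneg (Finset.prod_nonneg fun j _ => hw0 _) (Nat.cast_nonneg _)
          have := mul_le_mul_of_nonneg_left h2 hδ0
          nlinarith [hT]
      _ = T * (∑ j ∈ Finset.range (k+1), δ ^ j) + δ ^ (k+1) * (base.cost p : ℝ) := by
          rw [geom_sum_succ]
          ring

open Classical in
lemma delta_le_two_eps (w : Ω → ℝ) (hw0 : ∀ ω, 0 ≤ w ω) (hw1 : ∑ ω, w ω = 1)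
    (trees : Ω → DTree ι Sab Bool) (p p' : ι → Sab) (b : Bool) (ε : ℝ)
    (hagree : ∀ ω, ¬ Hits (trees ω) p → (trees ω).output p = (trees ω).output p')
    (h1 : 1 - ε ≤ ∑ ω, @ite ℝ ((trees ω).output p = b)
      (Classical.propDecidable _) (w ω) 0)
    (h2 : 1 - ε ≤ ∑ ω, @ite ℝ ((trees ω).output p' = !b)
      (Classical.propDecidable _) (w ω) 0) :
    (∑ ω, if Hits (trees ω) p then 0 else w ω) ≤ 2 * ε := by
  have h1' : 1 - ε ≤ ∑ ω, if (trees ω).output p = b then w ω else 0 :=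
    le_of_le_of_eq h1 (Finset.sum_congr rfl fun ω _ => by congr)
  have h2' : 1 - ε ≤ ∑ ω, if (trees ω).output p' = !b then w ω else 0 :=
    le_of_le_of_eq h2 (Finset.sum_congr rfl fun ω _ => by congr)
  clear h1 h2
  rename' h1' => h1, h2' => h2
  have key : (∑ ω, if Hits (trees ω) p then 0 else w ω)
      ≤ (∑ ω, if (trees ω).output p = b then 0 else w ω)
        + (∑ ω, if (trees ω).output p' = !b then 0 else w ω) := by
    rw [← Finset.sum_add_distrib]
    refine Finset.sum_le_sum fun ω _ => ?_
    by_cases hh : Hits (trees ω) p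
    · rw [if_pos hh]
      have : ∀ (P : Prop) [Decidable P], (0:ℝ) ≤ if P then 0 else w ω := by
        intro P _; split <;> simp [hw0 ω]
      exact add_nonneg (this _) (this _)
    · rw [if_neg hh]
      by_cases hb : (trees ω).output p = b
      · have : (trees ω).output p' ≠ !b := by
          rw [← hagree ω hh, hb]; simp
        rw [if_neg this, if_pos hb]
        simp
      · rw [if_neg hb]
        have : ∀ (P : Prop) [Decidable P], (0:ℝ) ≤ if P then 0 else w ω := by
          intro P _; split <;> simp [hw0 ω]
        nlinarith [this ((trees ω).output p' = !b)]
  have e1 := sum_split w (fun ω => (trees ω).output p = b)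
  have e2 := sum_split w (fun ω => (trees ω).output p' = !b)
  rw [hw1] at e1 e2
  linarith

end SabAux
open SabAux in
/-- **Bounded-error and zero-error complexity of the sabotage problem agree.**
For every partial Boolean function `f` and `ε ∈ [0, 1/2)`:
`R₀(f_sab) ≥ R̄_ε(f_sab) ≥ (1 − 2ε) · R₀(f_sab)`. -/
theorem sabotage_bounded_vs_zero_error {n : ℕ} (f : PFn (Fin n) Bool Bool)
    (ε : ℝ) (hε0 : 0 ≤ ε) (hε : ε < 1/2) :
    Rbar ε (fsab f) ≤ R0 (fsab f) ∧ (1 - 2*ε) * R0 (fsab f) ≤ Rbar ε (fsab f) := by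
  classical
  set full : DTree (Fin n) Sab Bool := sweep (List.finRange n) with hfulldef
  have hfull_out : ∀ p b, fsab f p = some b → full.output p = b := by
    intro p b hpb
    obtain ⟨hg, i, hi⟩ := good_of_fsab hpb
    exact sweep_output hg _ ⟨i, List.mem_finRange i, hi⟩
  have hfull_cost : ∀ p, ((full.cost p : ℝ)) ≤ n := by
    intro p
    have := sweep_cost p (List.finRange n)
    rw [List.length_finRange] at this
    exact_mod_cast this
  let A0 : RandAlg (Fin n) Sab Bool :=
    { Ω := PUnit, p := fun _ => 1, nonneg := fun _ => zero_le_one,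
      sum_one := by simp, tree := fun _ => full }
  have hA0comp : A0.Computes (fsab f) 0 := by
    intro x b hxb
    unfold RandAlg.succProb
    simp [A0, hfull_out x b hxb]
  have hA0cost : A0.ECostLe (fsab f) n := by
    intro x _
    unfold RandAlg.expCost
    simpa [A0] using hfull_cost x
  have hmemS0 : (n : ℝ) ∈ {T : ℝ | 0 ≤ T ∧
      ∃ A : RandAlg (Fin n) Sab Bool, A.Computes (fsab f) 0 ∧ A.ECostLe (fsab f) T} :=
    ⟨Nat.cast_nonneg n, A0, hA0comp, hA0cost⟩
  have hsub : {T : ℝ | 0 ≤ T ∧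
        ∃ A : RandAlg (Fin n) Sab Bool, A.Computes (fsab f) 0 ∧ A.ECostLe (fsab f) T}
      ⊆ {T : ℝ | 0 ≤ T ∧
        ∃ A : RandAlg (Fin n) Sab Bool, A.Computes (fsab f) ε ∧ A.ECostLe (fsab f) T} := by
    rintro T ⟨hT0, A, hc, he⟩
    exact ⟨hT0, A, fun x b hxb => le_trans (by linarith) (hc x b hxb), he⟩
  have h2ε : (0:ℝ) < 1 - 2*ε := by linarith
  constructor
  · unfold R0 Rbar
    exact csInf_le_csInf ⟨0, fun T hT => hT.1⟩ ⟨(n:ℝ), hmemS0⟩ hsub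
  · show (1 - 2*ε) * R0 (fsab f) ≤ Rbar ε (fsab f)
    unfold Rbar
    refine le_csInf ⟨(n:ℝ), hsub hmemS0⟩ ?_
    rintro T ⟨hT0, A, hAc, hAe⟩
    rw [mul_comm, ← le_div_iff₀ h2ε]
    letI := A.fin
    have hk : ∀ k : ℕ, R0 (fsab f) ≤ T / (1 - 2*ε) + (2*ε)^k * n := by
      intro k
      let Bk : RandAlg (Fin n) Sab Bool :=
        { Ω := Fin k → A.Ω,
          p := fun ω => ∏ j, A.p (ω j),
          nonneg := fun ω => Finset.prod_nonneg fun j _ => A.nonneg _,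
          sum_one := prodw_sum A.p A.sum_one k,
          tree := fun ω => chain full (List.ofFn fun j => A.tree (ω j)) }
      have hBcomp : Bk.Computes (fsab f) 0 := by
        intro x b hxb
        have hout : ∀ ω, (Bk.tree ω).output x = b := fun ω =>
          chain_output (good_of_fsab hxb).1 (hfull_out x b hxb) _
        unfold RandAlg.succProb
        rw [@sum_ite_all _ _ Bk.p _ (fun _ => Classical.propDecidable _) hout, Bk.sum_one]
        norm_num
      have hBcost : Bk.ECostLe (fsab f) (T / (1 - 2*ε) + (2*ε)^k * n) := by
        intro x hx
        obtain ⟨b, hxb⟩ := Option.isSome_iff_exists.mp hx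
        set δ : ℝ := ∑ ω, if Hits (A.tree ω) x then 0 else A.p ω with hδdef
        have hδ0 : 0 ≤ δ :=
          Finset.sum_nonneg fun ω _ => by split <;> simp [A.nonneg ω]
        -- δ ≤ 2ε via the flipped input
        have hflip : fsab f (flipSD x) = some (!b) := fsab_flip hxb
        have hagree : ∀ ω, ¬ Hits (A.tree ω) x →
            (A.tree ω).output x = (A.tree ω).output (flipSD x) := by
          intro ω hh
          refine output_congr _ fun i hi => ?_
          have h1 : x i ≠ Sab.star ∧ x i ≠ Sab.dagger := by
            constructor <;> intro hcon <;> exact hh ⟨i, hi, by tauto⟩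
          exact (flip_eq_of_bool h1.1 h1.2).symm
        have h1 := hAc x b hxb
        have h2 := hAc (flipSD x) (!b) hflip
        unfold RandAlg.succProb at h1 h2
        have hδle : δ ≤ 2 * ε :=
          delta_le_two_eps A.p A.nonneg A.sum_one A.tree x (flipSD x) b ε
            hagree h1 h2
        have hexp : A.expCost x ≤ T := hAe x hx
        have hEcost : ∑ ω, A.p ω * ((A.tree ω).cost x : ℝ) ≤ T := hexp
        have hmain := chain_cost_bound A.p A.nonneg A.sum_one A.tree x full T hT0 hEcost k
        rw [← hδdef] at hmain
        have hSle : T * (∑ j ∈ Finset.range k, δ ^ j) ≤ T / (1 - 2*ε) := by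
          have hstep : (∑ j ∈ Finset.range k, δ ^ j) ≤ ∑ j ∈ Finset.range k, (2*ε) ^ j :=
            Finset.sum_le_sum fun j _ => pow_le_pow_left₀ hδ0 hδle j
          have hgeom : (∑ j ∈ Finset.range k, (2*ε) ^ j) * (2*ε - 1) = (2*ε)^k - 1 :=
            geom_sum_mul (2*ε) k
          have hpk : (0:ℝ) ≤ (2*ε)^k := by positivity
          have hS2 : (∑ j ∈ Finset.range k, (2*ε) ^ j) ≤ 1 / (1 - 2*ε) := by
            rw [le_div_iff₀ h2ε]
            nlinarith
          calc T * (∑ j ∈ Finset.range k, δ ^ j)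
              ≤ T * (∑ j ∈ Finset.range k, (2*ε) ^ j) :=
                mul_le_mul_of_nonneg_left hstep hT0
            _ ≤ T * (1 / (1 - 2*ε)) := mul_le_mul_of_nonneg_left hS2 hT0
            _ = T / (1 - 2*ε) := by ring
        have hNle : δ ^ k * ((full.cost x : ℝ)) ≤ (2*ε)^k * n := by
          have h1 : δ ^ k ≤ (2*ε)^k := pow_le_pow_left₀ hδ0 hδle k
          have h2 : (0:ℝ) ≤ (full.cost x : ℝ) := Nat.cast_nonneg _
          have := hfull_cost x
          have hpk : (0:ℝ) ≤ δ ^ k := by positivity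
          nlinarith
        show Bk.expCost x ≤ T / (1 - 2*ε) + (2*ε)^k * n
        refine le_trans ?_ (add_le_add hSle hNle)
        exact hmain
      have hTk0 : (0:ℝ) ≤ T / (1 - 2*ε) + (2*ε)^k * n := by
        have := div_nonneg hT0 h2ε.le
        have h2 : (0:ℝ) ≤ (2*ε)^k * n := by positivity
        linarith
      exact csInf_le ⟨0, fun T' hT' => hT'.1⟩ ⟨hTk0, Bk, hBcomp, hBcost⟩
    have hlim : Filter.Tendsto (fun k : ℕ => T / (1 - 2*ε) + (2*ε)^k * n)
        Filter.atTop (nhds (T / (1 - 2*ε) + 0 * n)) := by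
      exact Filter.Tendsto.add tendsto_const_nhds
        (Filter.Tendsto.mul_const _
          (tendsto_pow_atTop_nhds_zero_of_lt_one (by linarith) (by linarith)))
    have := ge_of_tendsto' hlim hk
    simpa using this
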